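/- Let p be a prime and n a positive integer. The number of distinct self-dual codes of length n over Z_{p^2} equals the sum over 0 ≤ k_1 ≤ ⌊n/2⌋ of M_{p^2}(k_1, n−2k_1), where M_{p^2}(k_1, k_2) = σ_p(n,k_1) · [n−2k_1 choose k_2]_p · p^{k_1(2n−3k_1−1−2k_2)/2} for odd primes p, and M_4(k_1, k_2) = σ(n,k_1) · [n−2k_1 choose k_2]_2 · 2^{k_1(2n−3k_1+1−2k_2)/2} for p = 2; here σ_p(n,k_1) is the number of distinct self-orthogonal p-ary codes of length n and dimension k_1, and σ(n,k_1) is the number of distinct doubly even binary codes of length n and dimension k_1. -/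

import Mathlib

open scoped BigOperators

set_option maxHeartbeats 1000000
set_option linter.unusedSectionVars false

namespace Paper

/-- Self-orthogonality of a set of vectors w.r.t. the standard inner product. -/
def sorth {m : ℕ} {ι : Type} [Fintype ι] (S : Set (ι → ZMod m)) : Prop :=
  ∀ x ∈ S, ∀ y ∈ S, ∑ i, x i * y i = 0

/-- The dual (as a set) of a set of vectors w.r.t. the standard inner product. -/
def dualSet {m : ℕ} {ι : Type} [Fintype ι] (S : Set (ι → ZMod m)) : Set (ι → ZMod m) :=
  {x | ∀ y ∈ S, ∑ i, x i * y i = 0}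

/-- A set of vectors is doubly even if every element has Hamming weight divisible by 4. -/
def doublyEven {m : ℕ} {ι : Type} [Fintype ι] (S : Set (ι → ZMod m)) : Prop :=
  ∀ x ∈ S, 4 ∣ (Finset.univ.filter fun i => x i ≠ 0).card

/-- Coordinatewise reduction map `(Z_{p^2})^ι → (Z_p)^ι`. -/
def res (p : ℕ) [Fact p.Prime] {ι : Type} (v : ι → ZMod (p ^ 2)) : ι → ZMod p :=
  fun i => ZMod.castHom (dvd_pow_self p (by norm_num)) (ZMod p) (v i)

/-- The injection `(Z_p)^ι → (Z_{p^2})^ι` induced by `Z_p ≅ pZ_{p^2} ⊆ Z_{p^2}`. -/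
def iot (p : ℕ) {ι : Type} (v : ι → ZMod p) : ι → ZMod (p ^ 2) :=
  fun i => (p : ZMod (p ^ 2)) * (ZMod.cast (v i))

/-- Coordinatewise reduction map `(Z_4)^ι → (Z_2)^ι`. -/
def res4 {ι : Type} (v : ι → ZMod 4) : ι → ZMod 2 :=
  fun i => ZMod.castHom (by norm_num : (2:ℕ) ∣ 4) (ZMod 2) (v i)

/-- The injection `(Z_2)^ι → (Z_4)^ι`. -/
def iot4 {ι : Type} (v : ι → ZMod 2) : ι → ZMod 4 :=
  fun i => (2 : ZMod 4) * (ZMod.cast (v i))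

/-- Euclidean weight on `Z_4`. -/
def ewt (x : ZMod 4) : ℕ := if x = 0 then 0 else if x = 2 then 4 else 1

/-- A quaternary code is even if every codeword has Euclidean weight divisible by 8. -/
def evenCode {ι : Type} [Fintype ι] (S : Set (ι → ZMod 4)) : Prop :=
  ∀ x ∈ S, 8 ∣ ∑ i, ewt (x i)

/-- The code over `Z_q` generated by the rows of an integer matrix. -/
def intRowSpan (q : ℕ) {κ ι : Type} (G : Matrix κ ι ℤ) :
    Submodule (ZMod q) (ι → ZMod q) :=
  Submodule.span (ZMod q) (Set.range fun i => fun c => ((G i c : ℤ) : ZMod q))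

/-- The Gaussian binomial coefficient `[n choose k]_p`. -/
def gauss (p n k : ℕ) : ℚ :=
  ∏ i ∈ Finset.range k, ((p : ℚ) ^ n - (p : ℚ) ^ i) / ((p : ℚ) ^ k - (p : ℚ) ^ i)

/-- `σ_p(n,k)`: the number of self-orthogonal codes of length `n` and dimension `k` over `Z_p`. -/
noncomputable def sigmaSO (p n k : ℕ) : ℕ :=
  {C : Submodule (ZMod p) (Fin n → ZMod p) |
    sorth (C : Set (Fin n → ZMod p)) ∧ Module.finrank (ZMod p) C = k}.ncard

/-- `σ(n,k)`: the number of doubly even binary codes of length `n` and dimension `k`. -/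
noncomputable def sigmaDE (n k : ℕ) : ℕ :=
  {C : Submodule (ZMod 2) (Fin n → ZMod 2) |
    doublyEven (C : Set (Fin n → ZMod 2)) ∧ Module.finrank (ZMod 2) C = k}.ncard

/-- `σ_𝟏(n,k)`: the number of doubly even binary codes of length `n` and dimension `k`
containing the all-ones vector. -/
noncomputable def sigmaOne (n k : ℕ) : ℕ :=
  {C : Submodule (ZMod 2) (Fin n → ZMod 2) |
    doublyEven (C : Set (Fin n → ZMod 2)) ∧ (fun _ => (1 : ZMod 2)) ∈ C ∧
    Module.finrank (ZMod 2) C = k}.ncard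

/-- `M_{p^2}(k₁,k₂)`: the mass formula value for self-orthogonal codes over `Z_{p^2}` of
type `{k₁,k₂}` and length `n`. -/
noncomputable def Mval (p n k1 k2 : ℕ) : ℚ :=
  if p = 2 then
    (sigmaDE n k1 : ℚ) * gauss 2 (n - 2 * k1) k2 * 2 ^ (k1 * (2 * n - 3 * k1 + 1 - 2 * k2) / 2)
  else
    (sigmaSO p n k1 : ℚ) * gauss p (n - 2 * k1) k2 *
      (p : ℚ) ^ (k1 * (2 * n - 3 * k1 - 1 - 2 * k2) / 2)

/-- `D_𝟏(k₁,k₂)`: the mass formula value for quaternary even codes of length `n`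
containing `𝟏`, of type `{k₁,k₂}`. -/
noncomputable def Done (n k1 k2 : ℕ) : ℚ :=
  (sigmaOne n k1 : ℚ) * gauss 2 (n - 2 * k1) k2 *
    2 ^ ((k1 - 1) * (2 * n - 3 * k1 - 2 - 2 * k2) / 2)

/-- `D(k₁,k₂)`: the mass formula value for quaternary even codes of length `n` containing an
element of `{±1}^n`, of type `{k₁,k₂}`. -/
noncomputable def Dpm (n k1 k2 : ℕ) : ℚ :=
  (sigmaOne n k1 : ℚ) * gauss 2 (n - 2 * k1) k2 *
    2 ^ ((n - k1 - k2) + (k1 - 1) * (2 * n - 3 * k1 - 2 - 2 * k2) / 2)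


-- ===== auxiliary development =====

variable {p : ℕ} [hp : Fact p.Prime]

local instance : NeZero p := ⟨hp.out.ne_zero⟩
local instance : NeZero (p ^ 2) := ⟨pow_ne_zero 2 hp.out.ne_zero⟩

/-- reduction mod p -/
def rr (z : ZMod (p ^ 2)) : ZMod p :=
  ZMod.castHom (dvd_pow_self p (two_ne_zero)) (ZMod p) z

lemma cast_eq_val (x : ZMod p) : (ZMod.cast x : ZMod (p ^ 2)) = (x.val : ZMod (p ^ 2)) :=
  (ZMod.natCast_val x).symm

lemma psq_zero : ((p : ZMod (p ^ 2)) ^ 2) = 0 := by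
  rw [← Nat.cast_pow, ZMod.natCast_self]

lemma pmul_natCast_mod (m : ℕ) :
    (p : ZMod (p ^ 2)) * ((m % p : ℕ) : ZMod (p ^ 2)) = p * (m : ZMod (p ^ 2)) := by
  conv_rhs => rw [← Nat.div_add_mod m p]
  push_cast
  ring_nf
  rw [psq_zero]
  ring

lemma rr_natCast (m : ℕ) : rr ((m : ℕ) : ZMod (p ^ 2)) = (m : ZMod p) := by
  simp [rr]

lemma rr_cast (x : ZMod p) : rr (ZMod.cast x : ZMod (p ^ 2)) = x := by
  rw [cast_eq_val, rr_natCast, ZMod.natCast_val, ZMod.cast_id]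

lemma val_cast_self (z : ZMod (p ^ 2)) : ((z.val : ℕ) : ZMod (p ^ 2)) = z := by
  rw [ZMod.natCast_val, ZMod.cast_id]

lemma rr_eq_val (z : ZMod (p ^ 2)) : rr z = ((z.val : ℕ) : ZMod p) := by
  have h := rr_natCast (p := p) z.val
  rw [val_cast_self] at h
  rw [h]

lemma nat_sq_dvd (m : ℕ) : p ^ 2 ∣ p * m ↔ p ∣ m := by
  rw [pow_two]
  exact mul_dvd_mul_iff_left (a := p) (by exact_mod_cast hp.out.ne_zero)

lemma pmul_eq_zero_iff (z : ZMod (p ^ 2)) : (p : ZMod (p ^ 2)) * z = 0 ↔ rr z = 0 := by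
  rw [rr_eq_val, ZMod.natCast_eq_zero_iff]
  conv_lhs => rw [← val_cast_self z]
  rw [← Nat.cast_mul, ZMod.natCast_eq_zero_iff]
  exact nat_sq_dvd z.val

lemma pmul_rr (z : ZMod (p ^ 2)) :
    (p : ZMod (p ^ 2)) * ZMod.cast (rr z) = p * z := by
  rw [rr_eq_val, cast_eq_val, ZMod.val_natCast, pmul_natCast_mod, val_cast_self]

lemma add_eq_natCast (a b : ZMod p) : a + b = ((a.val + b.val : ℕ) : ZMod p) := by
  rw [Nat.cast_add, ZMod.natCast_val, ZMod.natCast_val, ZMod.cast_id, ZMod.cast_id]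

lemma mul_eq_natCast (a b : ZMod p) : a * b = ((a.val * b.val : ℕ) : ZMod p) := by
  rw [Nat.cast_mul, ZMod.natCast_val, ZMod.natCast_val, ZMod.cast_id, ZMod.cast_id]

lemma pmul_cast_natCast (m : ℕ) :
    (p : ZMod (p ^ 2)) * ZMod.cast ((m : ZMod p)) = p * (m : ZMod (p ^ 2)) := by
  rw [cast_eq_val, ZMod.val_natCast, pmul_natCast_mod]

lemma pmul_cast_add (a b : ZMod p) :
    (p : ZMod (p ^ 2)) * ZMod.cast (a + b) =
      p * ZMod.cast a + p * ZMod.cast b := by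
  rw [add_eq_natCast a b, pmul_cast_natCast, Nat.cast_add, cast_eq_val, cast_eq_val]
  ring

lemma pmul_cast_mul (a b : ZMod p) :
    (p : ZMod (p ^ 2)) * ZMod.cast (a * b) =
      (p * ZMod.cast a) * ZMod.cast b := by
  rw [mul_eq_natCast a b, pmul_cast_natCast, Nat.cast_mul, cast_eq_val, cast_eq_val]
  ring

/-- `w ↦ p * cast w` as an additive monoid hom. -/
def pcast (p : ℕ) [Fact p.Prime] : ZMod p →+ ZMod (p ^ 2) where
  toFun w := (p : ZMod (p ^ 2)) * ZMod.cast w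
  map_zero' := by simp
  map_add' := pmul_cast_add

lemma pcast_apply (w : ZMod p) : pcast p w = (p : ZMod (p ^ 2)) * ZMod.cast w := rfl

lemma pcast_eq_zero_iff (w : ZMod p) : pcast p w = 0 ↔ w = 0 := by
  rw [pcast_apply, pmul_eq_zero_iff, rr_cast]

lemma pcast_injective : Function.Injective (pcast p) := by
  intro a b h
  have : pcast p (a - b) = 0 := by
    rw [map_sub, h, sub_self]
  rw [pcast_eq_zero_iff, sub_eq_zero] at this
  exact this

lemma pcast_mul_cast (a b : ZMod p) : pcast p (a * b) = pcast p a * ZMod.cast b :=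
  pmul_cast_mul a b

lemma pmul_self_pcast (z : ZMod (p ^ 2)) : (p : ZMod (p ^ 2)) * z = pcast p (rr z) := by
  rw [pcast_apply, pmul_rr]

section DotAndDual

variable {p : ℕ} [hp : Fact p.Prime] {n : ℕ}

/-- mirror of the statement's `res` -/
def res' (v : Fin n → ZMod (p ^ 2)) : Fin n → ZMod p := fun i => rr (v i)

/-- mirror of the statement's `iot` -/
def iot' (w : Fin n → ZMod p) : Fin n → ZMod (p ^ 2) := fun i => pcast p (w i)

lemma rr_dot (x y : Fin n → ZMod (p ^ 2)) :
    rr (∑ i, x i * y i) = ∑ i, res' x i * res' y i := by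
  rw [rr, map_sum]
  exact Finset.sum_congr rfl fun i _ => map_mul _ _ _

lemma dot_iot_left (w : Fin n → ZMod p) (y : Fin n → ZMod (p ^ 2)) :
    ∑ i, iot' w i * y i = pcast p (∑ i, w i * res' y i) := by
  rw [map_sum]
  refine Finset.sum_congr rfl fun i _ => ?_
  rw [pcast_mul_cast]
  show (p : ZMod (p^2)) * ZMod.cast (w i) * y i
      = (p : ZMod (p^2)) * ZMod.cast (w i) * ZMod.cast (res' y i)
  calc (p : ZMod (p^2)) * ZMod.cast (w i) * y i
      = ZMod.cast (w i) * ((p : ZMod (p^2)) * y i) := by ring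
    _ = ZMod.cast (w i) * ((p : ZMod (p^2)) * ZMod.cast (rr (y i))) := by rw [pmul_rr]
    _ = (p : ZMod (p^2)) * ZMod.cast (w i) * ZMod.cast (res' y i) :=
        by show _ = _ * ZMod.cast (rr (y i)); ring

lemma dot_iot_right (w : Fin n → ZMod p) (y : Fin n → ZMod (p ^ 2)) :
    ∑ i, y i * iot' w i = pcast p (∑ i, w i * res' y i) := by
  rw [← dot_iot_left]
  exact Finset.sum_congr rfl fun i _ => mul_comm _ _

lemma pcast_mul_pcast (a b : ZMod p) : pcast p a * pcast p b = 0 := by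
  rw [pcast_apply, pcast_apply]
  calc (p : ZMod (p^2)) * ZMod.cast a * ((p : ZMod (p^2)) * ZMod.cast b)
      = (p : ZMod (p^2))^2 * (ZMod.cast a * ZMod.cast b) := by ring
    _ = 0 := by rw [psq_zero, zero_mul]

lemma dot_iot_iot (w w' : Fin n → ZMod p) : ∑ i, iot' w i * iot' w' i = 0 := by
  refine Finset.sum_eq_zero fun i _ => pcast_mul_pcast _ _

/-- dot product pairing as map to the dual -/
noncomputable def dotLin (p n : ℕ) [Fact p.Prime] :
    (Fin n → ZMod p) →ₗ[ZMod p] Module.Dual (ZMod p) (Fin n → ZMod p) :=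
  (Pi.basisFun (ZMod p) (Fin n)).toDual

lemma dotLin_apply (x y : Fin n → ZMod p) : dotLin p n x y = ∑ i, x i * y i := by
  rw [dotLin]
  have hx : x = ∑ i, x i • (Pi.basisFun (ZMod p) (Fin n)) i := by
    simp [Pi.basisFun_apply]
    ext j
    simp [Finset.sum_apply, Pi.single_apply]
  conv_lhs => rw [hx]
  rw [map_sum]
  simp only [LinearMap.sum_apply, Finset.sum_apply, map_smul, LinearMap.smul_apply]
  refine Finset.sum_congr rfl fun i _ => ?_
  rw [Module.Basis.toDual_apply_right, Pi.basisFun_repr, smul_eq_mul]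

/-- the dual code as a submodule -/
noncomputable def dualSub (C1 : Submodule (ZMod p) (Fin n → ZMod p)) :
    Submodule (ZMod p) (Fin n → ZMod p) :=
  (C1.map (dotLin p n)).dualCoannihilator

lemma mem_dualSub {C1 : Submodule (ZMod p) (Fin n → ZMod p)} (x : Fin n → ZMod p) :
    x ∈ dualSub C1 ↔ ∀ y ∈ C1, ∑ i, x i * y i = 0 := by
  rw [dualSub, Submodule.mem_dualCoannihilator]
  constructor
  · intro h y hy
    have := h (dotLin p n y) (Submodule.mem_map_of_mem hy)
    rw [dotLin_apply] at this
    rw [← this]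
    exact Finset.sum_congr rfl fun i _ => mul_comm _ _
  · intro h φ hφ
    obtain ⟨y, hy, rfl⟩ := hφ
    rw [dotLin_apply]
    rw [← h y hy]
    exact Finset.sum_congr rfl fun i _ => mul_comm _ _

lemma coe_dualSub (C1 : Submodule (ZMod p) (Fin n → ZMod p)) :
    (dualSub C1 : Set (Fin n → ZMod p)) = dualSet (C1 : Set (Fin n → ZMod p)) := by
  ext x
  rw [SetLike.mem_coe, mem_dualSub]
  rfl

lemma finrank_add_finrank_dualSub (C1 : Submodule (ZMod p) (Fin n → ZMod p)) :
    Module.finrank (ZMod p) C1 + Module.finrank (ZMod p) (dualSub C1) = n := by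
  have h := Subspace.finrank_add_finrank_dualCoannihilator_eq (K := ZMod p)
    (V := Fin n → ZMod p) (C1.map (dotLin p n))
  have hmap : Module.finrank (ZMod p) (C1.map (dotLin p n)) = Module.finrank (ZMod p) C1 := by
    have heq : C1.map (dotLin p n) =
        C1.map (((Pi.basisFun (ZMod p) (Fin n)).toDualEquiv :
          (Fin n → ZMod p) →ₗ[ZMod p] Module.Dual (ZMod p) (Fin n → ZMod p))) := rfl
    rw [heq, LinearEquiv.finrank_map_eq]
  rw [hmap] at h
  have hn : Module.finrank (ZMod p) (Fin n → ZMod p) = n := by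
    rw [Module.finrank_pi, Fintype.card_fin]
  rw [hn] at h
  exact h

lemma le_dualSub_dualSub (C1 : Submodule (ZMod p) (Fin n → ZMod p)) :
    C1 ≤ dualSub (dualSub C1) := by
  intro y hy
  rw [mem_dualSub]
  intro z hz
  rw [mem_dualSub] at hz
  rw [← hz y hy]
  exact Finset.sum_congr rfl fun i _ => mul_comm _ _

lemma dualSub_dualSub (C1 : Submodule (ZMod p) (Fin n → ZMod p)) :
    dualSub (dualSub C1) = C1 := by
  have h1 := finrank_add_finrank_dualSub C1
  have h2 := finrank_add_finrank_dualSub (dualSub C1)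
  refine (Submodule.eq_of_le_of_finrank_le (le_dualSub_dualSub C1) ?_).symm
  omega

lemma finrank_dualSub_le_iff {C1 : Submodule (ZMod p) (Fin n → ZMod p)}
    (h : C1 ≤ dualSub C1) : 2 * Module.finrank (ZMod p) C1 ≤ n := by
  have h1 := finrank_add_finrank_dualSub C1
  have h2 : Module.finrank (ZMod p) C1 ≤ Module.finrank (ZMod p) (dualSub C1) :=
    Submodule.finrank_mono h
  omega

/-- `v ↦ p * cast v` vector version is injective -/
lemma iot'_injective : Function.Injective (iot' (p := p) (n := n)) := by
  intro a b h
  funext i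
  exact pcast_injective (congrFun h i)

lemma res'_iot' (w : Fin n → ZMod p) : res' (iot' w) = 0 := by
  funext i
  show rr (pcast p (w i)) = 0
  rw [pcast_apply, ← pmul_eq_zero_iff]
  calc (p : ZMod (p^2)) * ((p : ZMod (p^2)) * ZMod.cast (w i))
      = (p : ZMod (p^2))^2 * ZMod.cast (w i) := by ring
    _ = 0 := by rw [psq_zero, zero_mul]

/-- explicit division by p -/
def pdiv (z : ZMod (p ^ 2)) : ZMod p := ((z.val / p : ℕ) : ZMod p)

lemma pcast_pdiv {z : ZMod (p ^ 2)} (h : rr z = 0) : pcast p (pdiv z) = z := by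
  rw [rr_eq_val, ZMod.natCast_eq_zero_iff] at h
  rw [pcast_apply, pdiv, cast_eq_val, ZMod.val_natCast, pmul_natCast_mod,
    ← Nat.cast_mul, Nat.mul_div_cancel' h, val_cast_self]

lemma res'_add (x y : Fin n → ZMod (p ^ 2)) : res' (x + y) = res' x + res' y := by
  funext i
  exact map_add (ZMod.castHom (dvd_pow_self p two_ne_zero) (ZMod p)) (x i) (y i)

lemma res'_sub (x y : Fin n → ZMod (p ^ 2)) : res' (x - y) = res' x - res' y := by
  funext i
  exact map_sub (ZMod.castHom (dvd_pow_self p two_ne_zero) (ZMod p)) (x i) (y i)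

lemma res'_zero : res' (0 : Fin n → ZMod (p ^ 2)) = 0 := by
  funext i
  exact map_zero (ZMod.castHom (dvd_pow_self p two_ne_zero) (ZMod p))

lemma exists_iot' {x : Fin n → ZMod (p ^ 2)} (h : res' x = 0) :
    iot' (fun i => pdiv (x i)) = x := by
  funext i
  exact pcast_pdiv (congrFun h i)

lemma rr_mul (a b : ZMod (p ^ 2)) : rr (a * b) = rr a * rr b :=
  map_mul (ZMod.castHom (dvd_pow_self p two_ne_zero) (ZMod p)) a b

lemma res'_castsmul (c : ZMod p) (y : Fin n → ZMod (p ^ 2)) :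
    res' ((ZMod.cast c : ZMod (p ^ 2)) • y) = c • res' y := by
  funext i
  show rr (ZMod.cast c * y i) = c * rr (y i)
  rw [rr_mul, rr_cast]

lemma res'_smul (r : ZMod (p ^ 2)) (y : Fin n → ZMod (p ^ 2)) :
    res' (r • y) = rr r • res' y := by
  funext i
  exact map_mul (ZMod.castHom (dvd_pow_self p two_ne_zero) (ZMod p)) r (y i)

lemma smul_iot' (r : ZMod (p ^ 2)) (w : Fin n → ZMod p) :
    r • iot' w = iot' (rr r • w) := by
  funext i
  show r * pcast p (w i) = pcast p (rr r * w i)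
  rw [pcast_apply, pcast_apply]
  calc r * ((p : ZMod (p^2)) * ZMod.cast (w i))
      = ((p : ZMod (p^2)) * r) * ZMod.cast (w i) := by ring
    _ = ((p : ZMod (p^2)) * ZMod.cast (rr r)) * ZMod.cast (w i) := by rw [pmul_rr]
    _ = (p : ZMod (p^2)) * ZMod.cast (rr r * w i) := by rw [pmul_cast_mul]

lemma pmul_smul_eq_iot' (d : ZMod (p ^ 2)) (y : Fin n → ZMod (p ^ 2)) :
    ((p : ZMod (p ^ 2)) * d) • y = iot' (rr d • res' y) := by
  funext i
  show (p : ZMod (p^2)) * d * y i = pcast p (rr d * res' y i)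
  rw [pcast_apply]
  calc (p : ZMod (p^2)) * d * y i
      = d * ((p : ZMod (p^2)) * y i) := by ring
    _ = d * ((p : ZMod (p^2)) * ZMod.cast (rr (y i))) := by rw [pmul_rr]
    _ = (p : ZMod (p^2)) * d * ZMod.cast (rr (y i)) := by ring
    _ = ((p : ZMod (p^2)) * ZMod.cast (rr d)) * ZMod.cast (rr (y i)) := by rw [pmul_rr]
    _ = (p : ZMod (p^2)) * ZMod.cast (rr d * res' y i) := by rw [pmul_cast_mul]; rfl

/-- the image of a code over `Z_{p^2}` under coordinatewise reduction, as a submodule -/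
def resCode (C : Submodule (ZMod (p ^ 2)) (Fin n → ZMod (p ^ 2))) :
    Submodule (ZMod p) (Fin n → ZMod p) where
  carrier := res' '' (C : Set (Fin n → ZMod (p ^ 2)))
  add_mem' := by
    rintro a b ⟨x, hx, rfl⟩ ⟨y, hy, rfl⟩
    exact ⟨x + y, C.add_mem hx hy, res'_add x y⟩
  zero_mem' := ⟨0, C.zero_mem, res'_zero⟩
  smul_mem' := by
    rintro c a ⟨x, hx, rfl⟩
    exact ⟨(ZMod.cast c : ZMod (p ^ 2)) • x, C.smul_mem _ hx, res'_castsmul c x⟩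

lemma mem_resCode {C : Submodule (ZMod (p ^ 2)) (Fin n → ZMod (p ^ 2))}
    {u : Fin n → ZMod p} : u ∈ resCode C ↔ ∃ x ∈ C, res' x = u := Iff.rfl

/-- the image of a `p`-ary code under `iot`, as a submodule over `Z_{p^2}` -/
def iotSub (D : Submodule (ZMod p) (Fin n → ZMod p)) :
    Submodule (ZMod (p ^ 2)) (Fin n → ZMod (p ^ 2)) where
  carrier := iot' '' (D : Set (Fin n → ZMod p))
  add_mem' := by
    rintro a b ⟨x, hx, rfl⟩ ⟨y, hy, rfl⟩
    refine ⟨x + y, D.add_mem hx hy, ?_⟩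
    funext i
    exact map_add (pcast p) (x i) (y i)
  zero_mem' := ⟨0, D.zero_mem, by funext i; exact map_zero (pcast p)⟩
  smul_mem' := by
    rintro c a ⟨x, hx, rfl⟩
    exact ⟨rr c • x, D.smul_mem _ hx, (smul_iot' c x).symm⟩

lemma mem_iotSub {D : Submodule (ZMod p) (Fin n → ZMod p)}
    {x : Fin n → ZMod (p ^ 2)} : x ∈ iotSub D ↔ ∃ w ∈ D, iot' w = x := Iff.rfl

/-- the dot product with a fixed vector, as a linear functional over `Z_{p^2}` -/
def dotR (x : Fin n → ZMod (p ^ 2)) : (Fin n → ZMod (p ^ 2)) →ₗ[ZMod (p ^ 2)] ZMod (p ^ 2) where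
  toFun y := ∑ i, x i * y i
  map_add' y z := by
    rw [← Finset.sum_add_distrib]
    exact Finset.sum_congr rfl fun i _ => by rw [Pi.add_apply, mul_add]
  map_smul' r y := by
    simp only [RingHom.id_apply]
    show (∑ i, x i * (r • y) i) = r • ∑ i, x i * y i
    rw [smul_eq_mul, Finset.mul_sum]
    exact Finset.sum_congr rfl fun i _ => by rw [Pi.smul_apply, smul_eq_mul]; ring

lemma mem_dualSet_iff {C : Submodule (ZMod (p ^ 2)) (Fin n → ZMod (p ^ 2))}
    {x : Fin n → ZMod (p ^ 2)} :
    x ∈ dualSet (C : Set (Fin n → ZMod (p ^ 2))) ↔ ∀ y ∈ C, ∑ i, x i * y i = 0 := Iff.rfl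

/-- to check `x ⊥ C`, it is enough to check on a generating set -/
lemma dualSet_of_span {S : Set (Fin n → ZMod (p ^ 2))}
    {C : Submodule (ZMod (p ^ 2)) (Fin n → ZMod (p ^ 2))} (hC : C ≤ Submodule.span _ S)
    {x : Fin n → ZMod (p ^ 2)} (h : ∀ g ∈ S, ∑ i, x i * g i = 0) :
    ∀ y ∈ C, ∑ i, x i * y i = 0 := by
  intro y hy
  have hs : Submodule.span (ZMod (p ^ 2)) S ≤ LinearMap.ker (dotR x) := by
    rw [Submodule.span_le]
    intro g hg
    exact h g hg
  exact hs (hC hy)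

end DotAndDual


section DotGeneral

variable {A : Type} [CommRing A] {n : ℕ}

/-- the dot product with a fixed vector, as a linear functional -/
def dotA (x : Fin n → A) : (Fin n → A) →ₗ[A] A where
  toFun y := ∑ i, x i * y i
  map_add' y z := by
    show (∑ i, x i * (y + z) i) = _
    rw [← Finset.sum_add_distrib]
    exact Finset.sum_congr rfl fun i _ => by rw [Pi.add_apply, mul_add]
  map_smul' r y := by
    simp only [RingHom.id_apply]
    show (∑ i, x i * (r • y) i) = r • ∑ i, x i * y i
    rw [smul_eq_mul, Finset.mul_sum]
    exact Finset.sum_congr rfl fun i _ => by rw [Pi.smul_apply, smul_eq_mul]; ring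

lemma dotA_apply (x y : Fin n → A) : dotA x y = ∑ i, x i * y i := rfl

lemma dot_comm (x y : Fin n → A) : ∑ i, x i * y i = ∑ i, y i * x i :=
  Finset.sum_congr rfl fun i _ => mul_comm _ _

/-- orthogonality to a spanning set extends to the span -/
lemma dot_eq_zero_of_span {S : Set (Fin n → A)} {C : Submodule A (Fin n → A)}
    (hC : C ≤ Submodule.span A S) {x : Fin n → A} (h : ∀ g ∈ S, ∑ i, x i * g i = 0) :
    ∀ y ∈ C, ∑ i, x i * y i = 0 := by
  intro y hy
  have hs : Submodule.span A S ≤ LinearMap.ker (dotA x) := by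
    rw [Submodule.span_le]
    intro g hg
    exact h g hg
  exact hs (hC hy)

end DotGeneral

section Structure

variable {p : ℕ} [hp : Fact p.Prime] {n : ℕ}

lemma mem_dualSub' {C1 : Submodule (ZMod p) (Fin n → ZMod p)} {S : Set (Fin n → ZMod p)}
    (hspan : C1 ≤ Submodule.span (ZMod p) S) (x : Fin n → ZMod p)
    (h : ∀ g ∈ S, ∑ i, x i * g i = 0) : x ∈ dualSub C1 := by
  rw [mem_dualSub]
  exact dot_eq_zero_of_span hspan h

/-- S1: for a self-dual code, `iot` of the dual of the residue code is contained in the code. -/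
lemma iotSub_dual_le {C : Submodule (ZMod (p ^ 2)) (Fin n → ZMod (p ^ 2))}
    (hC : dualSet (C : Set (Fin n → ZMod (p ^ 2))) ⊆ (C : Set (Fin n → ZMod (p ^ 2)))) :
    iotSub (dualSub (resCode C)) ≤ C := by
  rintro x ⟨w, hw, rfl⟩
  apply hC
  intro y hy
  rw [dot_iot_left]
  have hw' : w ∈ dualSub (resCode C) := hw
  have : ∑ i, w i * res' y i = 0 := by
    rw [mem_dualSub] at hw'
    exact hw' (res' y) ⟨y, hy, rfl⟩
  rw [this, map_zero]

/-- S2: a codeword of a self-orthogonal code reducing to zero lies in `iot` of the dual. -/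
lemma ker_res_le_iotSub {C : Submodule (ZMod (p ^ 2)) (Fin n → ZMod (p ^ 2))}
    (hC : (C : Set (Fin n → ZMod (p ^ 2))) ⊆ dualSet (C : Set (Fin n → ZMod (p ^ 2))))
    {x : Fin n → ZMod (p ^ 2)} (hx : x ∈ C) (h0 : res' x = 0) :
    x ∈ iotSub (dualSub (resCode C)) := by
  refine ⟨fun i => pdiv (x i), ?_, exists_iot' h0⟩
  show _ ∈ dualSub (resCode C)
  rw [mem_dualSub]
  rintro u ⟨y, hy, rfl⟩
  have hdot : ∑ i, x i * y i = 0 := hC hx y hy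
  rw [← exists_iot' h0, dot_iot_left] at hdot
  exact pcast_injective (by rw [hdot, map_zero])

/-- S3: membership in the dual of the residue code from `iot` membership. -/
lemma mem_dualSub_of_iot_mem {C : Submodule (ZMod (p ^ 2)) (Fin n → ZMod (p ^ 2))}
    (hC : (C : Set (Fin n → ZMod (p ^ 2))) ⊆ dualSet (C : Set (Fin n → ZMod (p ^ 2))))
    {w : Fin n → ZMod p} (hw : iot' w ∈ C) : w ∈ dualSub (resCode C) := by
  rw [mem_dualSub]
  rintro u ⟨y, hy, rfl⟩
  have hdot : ∑ i, iot' w i * y i = 0 := by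
    rw [dot_comm]
    exact hC hy _ hw
  rw [dot_iot_left] at hdot
  exact pcast_injective (by rw [hdot, map_zero])

/-- the residue code of a self-orthogonal code is self-orthogonal. -/
lemma resCode_le_dualSub {C : Submodule (ZMod (p ^ 2)) (Fin n → ZMod (p ^ 2))}
    (hC : (C : Set (Fin n → ZMod (p ^ 2))) ⊆ dualSet (C : Set (Fin n → ZMod (p ^ 2)))) :
    resCode C ≤ dualSub (resCode C) := by
  rintro u ⟨x, hx, rfl⟩
  rw [mem_dualSub]
  rintro v ⟨y, hy, rfl⟩
  have hdot : ∑ i, x i * y i = 0 := hC hx y hy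
  have := rr_dot x y
  rw [hdot] at this
  rw [← this, rr]
  exact map_zero _

lemma res'_sum {k : ℕ} (f : Fin k → (Fin n → ZMod (p ^ 2))) :
    res' (∑ i, f i) = ∑ i, res' (f i) := by
  funext j
  show rr ((∑ i, f i) j) = _
  rw [Finset.sum_apply]
  rw [show rr (∑ i, f i j) = (ZMod.castHom (dvd_pow_self p two_ne_zero) (ZMod p))
    (∑ i, f i j) from rfl, map_sum]
  rw [Finset.sum_apply]
  rfl

lemma iot'_sum {k : ℕ} (f : Fin k → (Fin n → ZMod p)) :
    iot' (∑ i, f i) = ∑ i, iot' (f i) := by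
  funext j
  show pcast p ((∑ i, f i) j) = _
  rw [Finset.sum_apply, map_sum, Finset.sum_apply]
  rfl

lemma iot'_sub (a b : Fin n → ZMod p) : iot' (a - b) = iot' a - iot' b := by
  funext j
  exact map_sub (pcast p) (a j) (b j)

lemma iot'_add (a b : Fin n → ZMod p) : iot' (a + b) = iot' a + iot' b := by
  funext j
  exact map_add (pcast p) (a j) (b j)

end Structure

section Lift

variable {p : ℕ} [hp : Fact p.Prime] {n k : ℕ}
variable (C1 : Submodule (ZMod p) (Fin n → ZMod p)) (vb : Fin k → (Fin n → ZMod p))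

/-- canonical lifts of the basis vectors -/
def tmat : Fin k → (Fin n → ZMod (p ^ 2)) := fun i j => ZMod.cast (vb i j)

/-- generators of a lifted code -/
def gen (w : Fin k → (Fin n → ZMod p)) : Fin k → Fin n → ZMod (p ^ 2) :=
  fun i => tmat vb i + iot' (w i)

/-- the lifted code determined by the correction vectors `w` -/
noncomputable def Cw (w : Fin k → (Fin n → ZMod p)) : Submodule (ZMod (p ^ 2)) (Fin n → ZMod (p ^ 2)) :=
  Submodule.span (ZMod (p ^ 2)) (Set.range (gen vb w)) ⊔ iotSub (dualSub C1)

/-- Gram matrix of the canonical lifts, divided by p -/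
def Hm : Fin k → Fin k → ZMod p := fun i j => pdiv (∑ l, tmat vb i l * tmat vb j l)

/-- the pairing matrix of corrections against the basis -/
def Xof (w : Fin k → (Fin n → ZMod p)) : Fin k → Fin k → ZMod p :=
  fun i j => ∑ l, w i l * vb j l

variable {C1 vb}

lemma res'_tmat (i : Fin k) : res' (tmat vb i) = vb i := by
  funext j
  exact rr_cast (vb i j)

lemma res'_gen (w : Fin k → (Fin n → ZMod p)) (i : Fin k) : res' (gen vb w i) = vb i := by
  rw [gen, res'_add, res'_tmat, res'_iot', add_zero]

lemma dot_vb (hso : C1 ≤ dualSub C1) (hmem : ∀ i, vb i ∈ C1) (i j : Fin k) :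
    ∑ l, vb i l * vb j l = 0 := by
  have h := hso (hmem i)
  rw [mem_dualSub] at h
  exact h (vb j) (hmem j)

lemma pcast_Hm (hso : C1 ≤ dualSub C1) (hmem : ∀ i, vb i ∈ C1) (i j : Fin k) :
    pcast p (Hm vb i j) = ∑ l, tmat vb i l * tmat vb j l := by
  refine pcast_pdiv ?_
  rw [rr_dot]
  have : ∀ a : Fin k, res' (tmat vb a) = vb a := res'_tmat
  rw [this i, this j]
  exact dot_vb hso hmem i j

lemma Hm_symm (hso : C1 ≤ dualSub C1) (hmem : ∀ i, vb i ∈ C1) (i j : Fin k) :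
    Hm vb i j = Hm vb j i := by
  refine pcast_injective ?_
  rw [pcast_Hm hso hmem, pcast_Hm hso hmem, dot_comm]

lemma rr_mul_aux {r : ZMod (p ^ 2)} : rr (r - ZMod.cast (rr r)) = 0 := by
  have : rr (r - ZMod.cast (rr r)) = rr r - rr (ZMod.cast (rr r)) :=
    map_sub (ZMod.castHom (dvd_pow_self p two_ne_zero) (ZMod p)) _ _
  rw [this, rr_cast, sub_self]

lemma r_decomp (r : ZMod (p ^ 2)) :
    ∃ d : ZMod p, r = ZMod.cast (rr r) + pcast p d := by
  refine ⟨pdiv (r - ZMod.cast (rr r)), ?_⟩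
  rw [pcast_pdiv (by rw [rr_mul_aux])]
  ring

lemma res'_comb (w : Fin k → (Fin n → ZMod p)) (c : Fin k → ZMod p) (v : Fin n → ZMod p) :
    res' ((∑ i, (ZMod.cast (c i) : ZMod (p ^ 2)) • gen vb w i) + iot' v) =
      ∑ i, c i • vb i := by
  rw [res'_add, res'_iot', add_zero, res'_sum]
  exact Finset.sum_congr rfl fun i _ => by rw [res'_castsmul, res'_gen]

lemma mem_Cw_iff (hso : C1 ≤ dualSub C1) (hmem : ∀ i, vb i ∈ C1)
    (w : Fin k → (Fin n → ZMod p)) {x : Fin n → ZMod (p ^ 2)} :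
    x ∈ Cw C1 vb w ↔ ∃ c : Fin k → ZMod p, ∃ v ∈ dualSub C1,
      x = (∑ i, (ZMod.cast (c i) : ZMod (p ^ 2)) • gen vb w i) + iot' v := by
  constructor
  · intro hx
    obtain ⟨s, hs, m, hm, rfl⟩ := Submodule.mem_sup.mp hx
    obtain ⟨cR, rfl⟩ := Submodule.mem_span_range_iff_exists_fun _ |>.mp hs
    obtain ⟨v0, hv0, rfl⟩ := hm
    choose d hd using fun i => r_decomp (cR i)
    refine ⟨fun i => rr (cR i), (∑ i, d i • vb i) + v0, ?_, ?_⟩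
    · refine Submodule.add_mem _ (Submodule.sum_mem _ fun i _ =>
        hso (C1.smul_mem _ (hmem i))) hv0
    · rw [iot'_add, iot'_sum]
      have hterm : ∀ i, cR i • gen vb w i =
          (ZMod.cast (rr (cR i)) : ZMod (p ^ 2)) • gen vb w i + iot' (d i • vb i) := by
        intro i
        rw [show iot' (d i • vb i) = iot' (rr (ZMod.cast (d i) : ZMod (p ^ 2)) • res' (gen vb w i)) by
              rw [rr_cast, res'_gen],
          ← pmul_smul_eq_iot', ← add_smul]
        congr 1
        conv_lhs => rw [hd i]
        rfl
      calc (∑ i, cR i • gen vb w i) + iot' v0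
          = (∑ i, ((ZMod.cast (rr (cR i)) : ZMod (p ^ 2)) • gen vb w i + iot' (d i • vb i)))
              + iot' v0 := by rw [Finset.sum_congr rfl fun i _ => hterm i]
        _ = (∑ i, (ZMod.cast (rr (cR i)) : ZMod (p ^ 2)) • gen vb w i)
              + ((∑ i, iot' (d i • vb i)) + iot' v0) := by
            rw [Finset.sum_add_distrib]; ring
  · rintro ⟨c, v, hv, rfl⟩
    refine Submodule.add_mem _ (Submodule.mem_sup_left (Submodule.sum_mem _ fun i _ =>
      Submodule.smul_mem _ _ (Submodule.subset_span ⟨i, rfl⟩)))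
      (Submodule.mem_sup_right ⟨v, hv, rfl⟩)

lemma dot_sub_left {x x' y : Fin n → ZMod (p ^ 2)} :
    ∑ l, (x - x') l * y l = (∑ l, x l * y l) - ∑ l, x' l * y l := by
  rw [← Finset.sum_sub_distrib]
  exact Finset.sum_congr rfl fun l _ => by rw [Pi.sub_apply, sub_mul]

lemma dot_gen_gen (hso : C1 ≤ dualSub C1) (hmem : ∀ i, vb i ∈ C1)
    (w : Fin k → (Fin n → ZMod p)) (i j : Fin k) :
    ∑ l, gen vb w i l * gen vb w j l =
      pcast p (Hm vb i j + Xof vb w i j + Xof vb w j i) := by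
  have hexp : ∀ l, gen vb w i l * gen vb w j l =
      tmat vb i l * tmat vb j l + iot' (w i) l * tmat vb j l
        + tmat vb i l * iot' (w j) l + iot' (w i) l * iot' (w j) l := by
    intro l
    show (tmat vb i l + iot' (w i) l) * (tmat vb j l + iot' (w j) l) = _
    ring
  rw [Finset.sum_congr rfl fun l _ => hexp l]
  rw [Finset.sum_add_distrib, Finset.sum_add_distrib, Finset.sum_add_distrib]
  rw [dot_iot_iot, add_zero, dot_iot_left, dot_iot_right, ← pcast_Hm hso hmem,
    res'_tmat, res'_tmat, ← map_add, ← map_add]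
  rfl

lemma dot_gen_iot (hmem : ∀ i, vb i ∈ C1) (w : Fin k → (Fin n → ZMod p))
    {v : Fin n → ZMod p} (hv : v ∈ dualSub C1) (i : Fin k) :
    ∑ l, gen vb w i l * iot' v l = 0 := by
  rw [dot_iot_right, res'_gen]
  rw [mem_dualSub] at hv
  rw [hv (vb i) (hmem i), map_zero]

lemma gen_mem_Cw (w : Fin k → (Fin n → ZMod p)) (i : Fin k) : gen vb w i ∈ Cw C1 vb w :=
  Submodule.mem_sup_left (Submodule.subset_span ⟨i, rfl⟩)

lemma iot_dual_mem_Cw (w : Fin k → (Fin n → ZMod p)) {v : Fin n → ZMod p}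
    (hv : v ∈ dualSub C1) : iot' v ∈ Cw C1 vb w :=
  Submodule.mem_sup_right ⟨v, hv, rfl⟩

lemma Cw_le_dualSet (hso : C1 ≤ dualSub C1) (hmem : ∀ i, vb i ∈ C1)
    {w : Fin k → (Fin n → ZMod p)}
    (hG : ∀ i j, Hm vb i j + Xof vb w i j + Xof vb w j i = 0) :
    (Cw C1 vb w : Set (Fin n → ZMod (p ^ 2)))
      ⊆ dualSet (Cw C1 vb w : Set (Fin n → ZMod (p ^ 2))) := by
  set S : Set (Fin n → ZMod (p ^ 2)) :=
    Set.range (gen vb w) ∪ (iot' '' (dualSub C1 : Set (Fin n → ZMod p))) with hS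
  have hCle : Cw C1 vb w ≤ Submodule.span (ZMod (p ^ 2)) S := by
    refine sup_le (Submodule.span_le.mpr ?_) ?_
    · exact fun g hg => Submodule.subset_span (Or.inl hg)
    · exact fun x hx => Submodule.subset_span (Or.inr hx)
  have horth : ∀ g ∈ S, ∀ g' ∈ S, ∑ l, g l * g' l = 0 := by
    rintro g (⟨i, rfl⟩ | ⟨v, hv, rfl⟩) g' (⟨j, rfl⟩ | ⟨v', hv', rfl⟩)
    · rw [dot_gen_gen hso hmem, hG, map_zero]
    · exact dot_gen_iot hmem w hv' _
    · rw [dot_comm]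
      exact dot_gen_iot hmem w hv _
    · exact dot_iot_iot _ _
  intro x hx y hy
  refine dot_eq_zero_of_span hCle (fun g hg => ?_) y hy
  rw [dot_comm]
  exact dot_eq_zero_of_span hCle (horth g hg) x hx

lemma dualSet_le_Cw (hso : C1 ≤ dualSub C1) (hmem : ∀ i, vb i ∈ C1)
    (hsp : C1 ≤ Submodule.span (ZMod p) (Set.range vb))
    {w : Fin k → (Fin n → ZMod p)}
    (hG : ∀ i j, Hm vb i j + Xof vb w i j + Xof vb w j i = 0) :
    dualSet (Cw C1 vb w : Set (Fin n → ZMod (p ^ 2)))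
      ⊆ (Cw C1 vb w : Set (Fin n → ZMod (p ^ 2))) := by
  intro x hx
  have hx' : ∀ y ∈ Cw C1 vb w, ∑ l, x l * y l = 0 := hx
  -- step 1 : res' x ∈ C1
  have hres : res' x ∈ C1 := by
    rw [← dualSub_dualSub (C1 := C1), mem_dualSub]
    intro v hv
    have h0 := hx' (iot' v) (iot_dual_mem_Cw w hv)
    rw [dot_iot_right] at h0
    have := pcast_injective (by rw [h0, map_zero] :
      pcast p (∑ l, v l * res' x l) = pcast p 0)
    rw [← this, dot_comm]
  obtain ⟨c, hc⟩ := (Submodule.mem_span_range_iff_exists_fun _).mp (hsp hres)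
  set s : Fin n → ZMod (p ^ 2) := ∑ i, (ZMod.cast (c i) : ZMod (p ^ 2)) • gen vb w i with hs
  have hsmem : s ∈ Cw C1 vb w :=
    Submodule.sum_mem _ fun i _ => Submodule.smul_mem _ _ (gen_mem_Cw w i)
  have hres0 : res' (x - s) = 0 := by
    rw [res'_sub]
    have : res' s = ∑ i, c i • vb i := by
      rw [hs, res'_sum]
      exact Finset.sum_congr rfl fun i _ => by rw [res'_castsmul, res'_gen]
    rw [this, hc, sub_self]
  have hx'' : ∀ y ∈ Cw C1 vb w, ∑ l, (x - s) l * y l = 0 := by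
    intro y hy
    rw [dot_sub_left, hx' y hy, zero_sub, neg_eq_zero]
    exact Cw_le_dualSet hso hmem hG hsmem y hy
  have hiot : iot' (fun j => pdiv ((x - s) j)) = x - s := exists_iot' hres0
  have humem : (fun j => pdiv ((x - s) j)) ∈ dualSub C1 := by
    refine mem_dualSub' hsp _ ?_
    rintro g ⟨i, rfl⟩
    have h0 := hx'' (gen vb w i) (gen_mem_Cw w i)
    rw [← hiot, dot_comm, dot_iot_right, res'_gen] at h0
    exact pcast_injective (by rw [h0, map_zero])
  have : x = s + (x - s) := by ring
  rw [this, ← hiot]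
  exact Submodule.add_mem _ hsmem (iot_dual_mem_Cw w humem)

lemma Cw_selfdual (hso : C1 ≤ dualSub C1) (hmem : ∀ i, vb i ∈ C1)
    (hsp : C1 ≤ Submodule.span (ZMod p) (Set.range vb))
    {w : Fin k → (Fin n → ZMod p)}
    (hG : ∀ i j, Hm vb i j + Xof vb w i j + Xof vb w j i = 0) :
    (Cw C1 vb w : Set (Fin n → ZMod (p ^ 2)))
      = dualSet (Cw C1 vb w : Set (Fin n → ZMod (p ^ 2))) :=
  Set.Subset.antisymm (Cw_le_dualSet hso hmem hG) (dualSet_le_Cw hso hmem hsp hG)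

lemma gram_of_selfdual (hso : C1 ≤ dualSub C1) (hmem : ∀ i, vb i ∈ C1)
    {w : Fin k → (Fin n → ZMod p)}
    (hsd : (Cw C1 vb w : Set (Fin n → ZMod (p ^ 2)))
      = dualSet (Cw C1 vb w : Set (Fin n → ZMod (p ^ 2)))) :
    ∀ i j, Hm vb i j + Xof vb w i j + Xof vb w j i = 0 := by
  intro i j
  have hgi : gen vb w i ∈ dualSet (Cw C1 vb w : Set (Fin n → ZMod (p ^ 2))) := by
    rw [← hsd]
    exact gen_mem_Cw w i
  have h0 := hgi (gen vb w j) (gen_mem_Cw w j)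
  rw [dot_gen_gen hso hmem] at h0
  rwa [pcast_eq_zero_iff] at h0


lemma resCode_Cw (hso : C1 ≤ dualSub C1) (hmem : ∀ i, vb i ∈ C1)
    (hsp : C1 ≤ Submodule.span (ZMod p) (Set.range vb))
    (w : Fin k → (Fin n → ZMod p)) : resCode (Cw C1 vb w) = C1 := by
  refine le_antisymm ?_ ?_
  · rintro u ⟨x, hx, rfl⟩
    obtain ⟨c, v, hv, rfl⟩ := (mem_Cw_iff hso hmem w).mp hx
    rw [res'_comb]
    exact Submodule.sum_mem _ fun i _ => C1.smul_mem _ (hmem i)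
  · intro u hu
    obtain ⟨c, hc⟩ := (Submodule.mem_span_range_iff_exists_fun _).mp (hsp hu)
    refine ⟨(∑ i, (ZMod.cast (c i) : ZMod (p ^ 2)) • gen vb w i) + iot' 0, ?_, ?_⟩
    · exact (mem_Cw_iff hso hmem w).mpr ⟨c, 0, (dualSub C1).zero_mem, rfl⟩
    · rw [res'_comb, hc]

lemma iot_mem_Cw (hso : C1 ≤ dualSub C1) (hmem : ∀ i, vb i ∈ C1)
    (hli : LinearIndependent (ZMod p) vb) {w : Fin k → (Fin n → ZMod p)}
    {u : Fin n → ZMod p} (h : iot' u ∈ Cw C1 vb w) : u ∈ dualSub C1 := by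
  obtain ⟨c, v, hv, heq⟩ := (mem_Cw_iff hso hmem w).mp h
  have hres : (0 : Fin n → ZMod p) = ∑ i, c i • vb i := by
    have := congrArg res' heq
    rwa [res'_iot', res'_comb] at this
  have hc0 : ∀ i, c i = 0 := by
    have := Fintype.linearIndependent_iff.mp hli c hres.symm
    exact this
  have hzero : (∑ i, (ZMod.cast (c i) : ZMod (p ^ 2)) • gen vb w i) = 0 := by
    refine Finset.sum_eq_zero fun i _ => ?_
    rw [hc0 i]
    show (ZMod.cast (0 : ZMod p) : ZMod (p ^ 2)) • gen vb w i = 0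
    rw [cast_eq_val, ZMod.val_zero, Nat.cast_zero, zero_smul]
  rw [hzero, zero_add] at heq
  have : u = v := iot'_injective heq
  rwa [this]

lemma Cw_eq_iff (hso : C1 ≤ dualSub C1) (hmem : ∀ i, vb i ∈ C1)
    (hli : LinearIndependent (ZMod p) vb) {w w' : Fin k → (Fin n → ZMod p)} :
    Cw C1 vb w = Cw C1 vb w' ↔ ∀ i, w i - w' i ∈ dualSub C1 := by
  have key : ∀ w w' : Fin k → (Fin n → ZMod p), (∀ i, w i - w' i ∈ dualSub C1) →
      Cw C1 vb w ≤ Cw C1 vb w' := by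
    intro w w' h
    refine sup_le (Submodule.span_le.mpr ?_) le_sup_right
    rintro g ⟨i, rfl⟩
    have : gen vb w i = gen vb w' i + iot' (w i - w' i) := by
      rw [gen, gen, iot'_sub]
      ring
    rw [this]
    exact Submodule.add_mem _ (gen_mem_Cw w' i) (iot_dual_mem_Cw w' (h i))
  constructor
  · intro h i
    have hg : iot' (w i - w' i) ∈ Cw C1 vb w' := by
      have h1 : gen vb w i ∈ Cw C1 vb w' := h ▸ gen_mem_Cw w i
      have : iot' (w i - w' i) = gen vb w i - gen vb w' i := by
        rw [gen, gen, iot'_sub]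
        ring
      rw [this]
      exact Submodule.sub_mem _ h1 (gen_mem_Cw w' i)
    exact iot_mem_Cw hso hmem hli hg
  · intro h
    refine le_antisymm (key w w' h) (key w' w fun i => ?_)
    have := (dualSub C1).neg_mem (h i)
    rwa [neg_sub] at this

lemma Xof_eq_iff (hmem : ∀ i, vb i ∈ C1)
    (hsp : C1 ≤ Submodule.span (ZMod p) (Set.range vb))
    {w w' : Fin k → (Fin n → ZMod p)} :
    Xof vb w = Xof vb w' ↔ ∀ i, w i - w' i ∈ dualSub C1 := by
  have hdot : ∀ (a b : Fin k → Fin n → ZMod p) i j,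
      ∑ l, (a i - b i) l * vb j l = Xof vb a i j - Xof vb b i j := by
    intro a b i j
    show _ = (∑ l, a i l * vb j l) - (∑ l, b i l * vb j l)
    rw [← Finset.sum_sub_distrib]
    exact Finset.sum_congr rfl fun l _ => by rw [Pi.sub_apply, sub_mul]
  constructor
  · intro h i
    refine mem_dualSub' hsp _ ?_
    rintro g ⟨j, rfl⟩
    rw [hdot w w' i j, h, sub_self]
  · intro h
    funext i j
    have hm := h i
    rw [mem_dualSub] at hm
    have := hm (vb j) (hmem j)
    rw [hdot w w' i j] at this
    exact sub_eq_zero.mp this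

lemma exists_w_rep {C : Submodule (ZMod (p ^ 2)) (Fin n → ZMod (p ^ 2))}
    (hC : (C : Set (Fin n → ZMod (p ^ 2))) = dualSet (C : Set (Fin n → ZMod (p ^ 2))))
    (hres : resCode C = C1) (hmem : ∀ i, vb i ∈ C1)
    (hsp : C1 ≤ Submodule.span (ZMod p) (Set.range vb)) :
    ∃ w, C = Cw C1 vb w := by
  have hsub : (C : Set (Fin n → ZMod (p ^ 2))) ⊆ dualSet (C : Set _) := hC.le
  have hsub' : dualSet (C : Set (Fin n → ZMod (p ^ 2))) ⊆ (C : Set _) := hC.ge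
  have hy : ∀ i, ∃ y ∈ C, res' y = vb i := by
    intro i
    have : vb i ∈ resCode C := hres ▸ hmem i
    exact this
  choose y hyC hyres using hy
  have hres0 : ∀ i, res' (y i - tmat vb i) = 0 := by
    intro i
    rw [res'_sub, hyres, res'_tmat, sub_self]
  refine ⟨fun i j => pdiv ((y i - tmat vb i) j), ?_⟩
  have hgen : ∀ i, gen vb (fun i j => pdiv ((y i - tmat vb i) j)) i = y i := by
    intro i
    rw [gen, exists_iot' (hres0 i)]
    ring
  refine le_antisymm ?_ ?_
  · -- C ≤ Cw
    intro x hx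
    have hrx : res' x ∈ C1 := hres ▸ ⟨x, hx, rfl⟩
    obtain ⟨c, hc⟩ := (Submodule.mem_span_range_iff_exists_fun _).mp (hsp hrx)
    set s : Fin n → ZMod (p ^ 2) :=
      ∑ i, (ZMod.cast (c i) : ZMod (p ^ 2)) • gen vb (fun i j => pdiv ((y i - tmat vb i) j)) i
      with hs
    have hsC : s ∈ C := by
      rw [hs]
      refine Submodule.sum_mem _ fun i _ => Submodule.smul_mem _ _ ?_
      rw [hgen i]
      exact hyC i
    have hx' : x - s ∈ C := C.sub_mem hx hsC
    have hresx' : res' (x - s) = 0 := by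
      rw [res'_sub]
      have : res' s = ∑ i, c i • vb i := by
        rw [hs, res'_sum]
        exact Finset.sum_congr rfl fun i _ => by rw [res'_castsmul, res'_gen]
      rw [this, hc, sub_self]
    have := ker_res_le_iotSub hsub hx' hresx'
    rw [hres] at this
    obtain ⟨v, hv, hveq⟩ := this
    have : x = s + iot' v := by rw [hveq]; ring
    rw [this]
    exact Submodule.add_mem _
      (Submodule.sum_mem _ fun i _ => Submodule.smul_mem _ _ (gen_mem_Cw _ i))
      (iot_dual_mem_Cw _ hv)
  · -- Cw ≤ C
    refine sup_le (Submodule.span_le.mpr ?_) ?_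
    · rintro g ⟨i, rfl⟩
      rw [hgen i]
      exact hyC i
    · have := iotSub_dual_le (C := C) hsub'
      rwa [hres] at this

lemma exists_w_Xof (hli : LinearIndependent (ZMod p) vb)
    (X : Fin k → Fin k → ZMod p) : ∃ w, Xof vb w = X := by
  set π : (Fin n → ZMod p) →ₗ[ZMod p] (Fin k → ZMod p) :=
    LinearMap.pi (fun j => dotA (vb j)) with hπ
  have hker : LinearMap.ker π = dualSub (Submodule.span (ZMod p) (Set.range vb)) := by
    ext v
    rw [LinearMap.mem_ker, mem_dualSub]
    constructor
    · intro h
      refine dot_eq_zero_of_span le_rfl ?_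
      rintro g ⟨j, rfl⟩
      have := congrFun h j
      rw [LinearMap.pi_apply] at this
      rw [dot_comm]
      exact this
    · intro h
      funext j
      rw [LinearMap.pi_apply, dotA_apply, dot_comm]
      exact h (vb j) (Submodule.subset_span ⟨j, rfl⟩)
  have hsurj : Function.Surjective π := by
    rw [← LinearMap.range_eq_top]
    have h1 := LinearMap.finrank_range_add_finrank_ker π
    have h2 := finrank_add_finrank_dualSub (Submodule.span (ZMod p) (Set.range vb))
    have h3 : Module.finrank (ZMod p) (Submodule.span (ZMod p) (Set.range vb)) = k := by
      rw [finrank_span_eq_card hli, Fintype.card_fin]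
    have h4 : Module.finrank (ZMod p) (Fin n → ZMod p) = n := by
      rw [Module.finrank_pi, Fintype.card_fin]
    have h5 : Module.finrank (ZMod p) (Fin k → ZMod p) = k := by
      rw [Module.finrank_pi, Fintype.card_fin]
    refine Submodule.eq_top_of_finrank_eq ?_
    rw [hker] at h1
    rw [h4] at h1
    omega
  have h6 : ∀ i, ∃ v, π v = fun j => X i j := fun i => hsurj _
  choose w hw using h6
  refine ⟨w, ?_⟩
  funext i j
  have := congrFun (hw i) j
  rw [LinearMap.pi_apply, dotA_apply, dot_comm] at this
  exact this

lemma dualSub_le_of_le {D1 D2 : Submodule (ZMod p) (Fin n → ZMod p)} (h : D1 ≤ D2) :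
    dualSub D2 ≤ dualSub D1 := by
  intro x hx
  rw [mem_dualSub] at hx ⊢
  exact fun y hy => hx y (h hy)

end Lift

section FiberCount

variable {p : ℕ} [hp : Fact p.Prime] {n k : ℕ}

open Classical in
/-- The key bijection: self-dual codes with residue code `C1` correspond to solutions `X`
of `H + X + Xᵀ = 0`. -/
noncomputable def fiberEquiv (C1 : Submodule (ZMod p) (Fin n → ZMod p))
    (vb : Fin k → (Fin n → ZMod p)) (hso : C1 ≤ dualSub C1) (hmem : ∀ i, vb i ∈ C1)
    (hsp : C1 ≤ Submodule.span (ZMod p) (Set.range vb))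
    (hli : LinearIndependent (ZMod p) vb) :
    {C : Submodule (ZMod (p ^ 2)) (Fin n → ZMod (p ^ 2)) //
        (C : Set (Fin n → ZMod (p ^ 2))) = dualSet (C : Set (Fin n → ZMod (p ^ 2))) ∧
        resCode C = C1} ≃
    {X : Fin k → Fin k → ZMod p // ∀ i j, Hm vb i j + X i j + X j i = 0} where
  toFun C := ⟨Xof vb (exists_w_rep C.2.1 C.2.2 hmem hsp).choose, by
    intro i j
    have hCw := (exists_w_rep C.2.1 C.2.2 hmem hsp).choose_spec
    exact gram_of_selfdual hso hmem (hCw ▸ C.2.1) i j⟩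
  invFun X := ⟨Cw C1 vb (exists_w_Xof hli X.1).choose, by
    have hX := (exists_w_Xof hli X.1).choose_spec
    have hG : ∀ i j, Hm vb i j + Xof vb (exists_w_Xof hli X.1).choose i j
        + Xof vb (exists_w_Xof hli X.1).choose j i = 0 := by
      intro i j
      rw [hX]
      exact X.2 i j
    exact ⟨Cw_selfdual hso hmem hsp hG, resCode_Cw hso hmem hsp _⟩⟩
  left_inv C := by
    apply Subtype.ext
    have h1 := (exists_w_rep C.2.1 C.2.2 hmem hsp).choose_spec
    set w1 := (exists_w_rep C.2.1 C.2.2 hmem hsp).choose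
    have h2 := (exists_w_Xof hli (Xof vb w1)).choose_spec
    set w2 := (exists_w_Xof hli (Xof vb w1)).choose
    show Cw C1 vb w2 = C.1
    rw [h1]
    rw [Cw_eq_iff hso hmem hli]
    exact (Xof_eq_iff hmem hsp).mp h2
  right_inv X := by
    apply Subtype.ext
    have h1 := (exists_w_Xof hli X.1).choose_spec
    set w1 := (exists_w_Xof hli X.1).choose
    have hfib : ((Cw C1 vb w1 : Submodule (ZMod (p ^ 2)) (Fin n → ZMod (p ^ 2))) :
        Set (Fin n → ZMod (p ^ 2))) = dualSet (Cw C1 vb w1 : Set (Fin n → ZMod (p ^ 2))) := by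
      refine Cw_selfdual hso hmem hsp ?_
      intro i j
      rw [h1]
      exact X.2 i j
    have hres : resCode (Cw C1 vb w1) = C1 := resCode_Cw hso hmem hsp _
    have h2 := (exists_w_rep hfib hres hmem hsp).choose_spec
    set w2 := (exists_w_rep hfib hres hmem hsp).choose
    show Xof vb w2 = X.1
    have : Cw C1 vb w2 = Cw C1 vb w1 := h2.symm
    rw [Cw_eq_iff hso hmem hli] at this
    rw [(Xof_eq_iff hmem hsp).mpr this, h1]
  
end FiberCount

section SolCount

variable {p : ℕ} [hp : Fact p.Prime] {k : ℕ}

/-- translation: solutions of the affine equation are in bijection with the homogeneous ones -/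
def solEquivAlt (H X0 : Fin k → Fin k → ZMod p)
    (hX0 : ∀ i j, H i j + X0 i j + X0 j i = 0) :
    {X : Fin k → Fin k → ZMod p // ∀ i j, H i j + X i j + X j i = 0} ≃
      {A : Fin k → Fin k → ZMod p // ∀ i j, A i j + A j i = 0} where
  toFun X := ⟨fun i j => X.1 i j - X0 i j, fun i j => by
    have h1 := X.2 i j
    have h2 := hX0 i j
    linear_combination h1 - h2⟩
  invFun A := ⟨fun i j => A.1 i j + X0 i j, fun i j => by
    have h1 := A.2 i j
    have h2 := hX0 i j
    linear_combination h1 + h2⟩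
  left_inv X := by
    apply Subtype.ext
    funext i j
    show X.1 i j - X0 i j + X0 i j = X.1 i j
    ring
  right_inv A := by
    apply Subtype.ext
    funext i j
    show A.1 i j + X0 i j - X0 i j = A.1 i j
    ring

/-- for odd `p`: antisymmetric matrices correspond to strictly-upper-triangular data -/
def altEquiv (hchar : ∀ a : ZMod p, a + a = 0 → a = 0) :
    {A : Fin k → Fin k → ZMod p // ∀ i j, A i j + A j i = 0} ≃
      ({q : Fin k × Fin k // q.1 < q.2} → ZMod p) where
  toFun A := fun q => A.1 q.1.1 q.1.2
  invFun f := ⟨fun i j =>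
      if h : i < j then f ⟨(i, j), h⟩ else if h' : j < i then - f ⟨(j, i), h'⟩ else 0, by
    intro i j
    rcases lt_trichotomy i j with h | h | h
    · simp only [dif_pos h, dif_neg (lt_asymm h)]
      ring
    · subst h
      simp only [dif_neg (lt_irrefl i)]
      ring
    · simp only [dif_neg (lt_asymm h), dif_pos h]
      ring⟩
  left_inv A := by
    apply Subtype.ext
    funext i j
    rcases lt_trichotomy i j with h | h | h
    · simp only [dif_pos h]
    · subst h
      simp only [dif_neg (lt_irrefl i)]
      exact (hchar _ (A.2 i i)).symm
    · simp only [dif_neg (lt_asymm h), dif_pos h]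
      have := A.2 i j
      linear_combination -this
  right_inv f := by
    funext q
    obtain ⟨⟨i, j⟩, h⟩ := q
    simp only [dif_pos h]

/-- for `p = 2`: symmetric matrices correspond to upper-triangular data -/
def symEquiv (hadd : ∀ a : ZMod p, a + a = 0) :
    {A : Fin k → Fin k → ZMod p // ∀ i j, A i j + A j i = 0} ≃
      ({q : Fin k × Fin k // q.1 ≤ q.2} → ZMod p) where
  toFun A := fun q => A.1 q.1.1 q.1.2
  invFun f := ⟨fun i j =>
      if h : i ≤ j then f ⟨(i, j), h⟩ else f ⟨(j, i), le_of_not_ge h⟩, by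
    intro i j
    rcases le_or_gt i j with h | h
    · rcases eq_or_lt_of_le h with rfl | hlt
      · simp only [dif_pos le_rfl]
        exact hadd _
      · simp only [dif_pos h, dif_neg (not_le_of_gt hlt)]
        exact hadd _
    · simp only [dif_neg (not_le_of_gt h), dif_pos (le_of_lt h)]
      exact hadd _⟩
  left_inv A := by
    apply Subtype.ext
    funext i j
    rcases le_or_gt i j with h | h
    · simp only [dif_pos h]
    · simp only [dif_neg (not_le_of_gt h)]
      have h2 := A.2 i j
      have h3 := hadd (A.1 j i)
      linear_combination h3 - h2
  right_inv f := by
    funext q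
    obtain ⟨⟨i, j⟩, h⟩ := q
    simp only [dif_pos h]

/-- strict pairs as a sigma type -/
def ltPairsEquiv (k : ℕ) : {q : Fin k × Fin k // q.1 < q.2} ≃ (Σ j : Fin k, Fin j.1) where
  toFun q := ⟨q.1.2, ⟨q.1.1.1, q.2⟩⟩
  invFun s := ⟨(⟨s.2.1, s.2.2.trans s.1.2⟩, s.1), s.2.2⟩
  left_inv q := by
    obtain ⟨⟨i, j⟩, h⟩ := q
    rfl
  right_inv s := by
    obtain ⟨j, m⟩ := s
    rfl

/-- weak pairs as a sigma type -/
def lePairsEquiv (k : ℕ) : {q : Fin k × Fin k // q.1 ≤ q.2} ≃ (Σ j : Fin k, Fin (j.1 + 1)) where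
  toFun q := ⟨q.1.2, ⟨q.1.1.1, Nat.lt_succ_of_le q.2⟩⟩
  invFun s := ⟨(⟨s.2.1, lt_of_le_of_lt (Nat.le_of_lt_succ s.2.2) s.1.2⟩, s.1),
    Nat.le_of_lt_succ s.2.2⟩
  left_inv q := by
    obtain ⟨⟨i, j⟩, h⟩ := q
    rfl
  right_inv s := by
    obtain ⟨j, m⟩ := s
    rfl

lemma card_ltPairs (k : ℕ) : Nat.card {q : Fin k × Fin k // q.1 < q.2} = k * (k - 1) / 2 := by
  rw [Nat.card_congr (ltPairsEquiv k), Nat.card_eq_fintype_card, Fintype.card_sigma]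
  have h := Finset.sum_range_id_mul_two k
  have heq : ∑ j : Fin k, Fintype.card (Fin j.1) = ∑ j ∈ Finset.range k, j :=
    (Finset.sum_congr rfl fun j _ => Fintype.card_fin _).trans
      (Fin.sum_univ_eq_sum_range (fun j => j) k)
  omega

lemma card_lePairs (k : ℕ) : Nat.card {q : Fin k × Fin k // q.1 ≤ q.2} = k * (k + 1) / 2 := by
  rw [Nat.card_congr (lePairsEquiv k), Nat.card_eq_fintype_card, Fintype.card_sigma]
  have h := Finset.sum_range_id_mul_two k
  have h1 : ∑ j : Fin k, Fintype.card (Fin (j.1 + 1)) = (∑ j ∈ Finset.range k, j) + k := by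
    have ha : ∑ j : Fin k, Fintype.card (Fin (j.1 + 1)) = ∑ j : Fin k, (j.1 + 1) :=
      Finset.sum_congr rfl fun j _ => Fintype.card_fin _
    have hb : ∑ j : Fin k, (j.1 + 1) = (∑ j : Fin k, j.1) + ∑ _j : Fin k, 1 :=
      Finset.sum_add_distrib
    have hc : (∑ j : Fin k, j.1) = ∑ j ∈ Finset.range k, j :=
      Fin.sum_univ_eq_sum_range (fun j => j) k
    have hd : (∑ _j : Fin k, (1 : ℕ)) = k := by
      rw [Finset.sum_const, Finset.card_univ, Fintype.card_fin, smul_eq_mul, mul_one]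
    omega
  have hk1 : k * (k - 1) + 2 * k = k * (k + 1) := by
    cases k with
    | zero => simp
    | succ m =>
      simp only [Nat.succ_sub_one]
      ring
  omega

lemma card_sol_odd (hp2 : (2 : ZMod p) ≠ 0) (H : Fin k → Fin k → ZMod p)
    (hsymm : ∀ i j, H i j = H j i) :
    Nat.card {X : Fin k → Fin k → ZMod p // ∀ i j, H i j + X i j + X j i = 0}
      = p ^ (k * (k - 1) / 2) := by
  have hchar : ∀ a : ZMod p, a + a = 0 → a = 0 := by
    intro a h
    have h2 : (2 : ZMod p) * a = 0 := by linear_combination h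
    rcases mul_eq_zero.mp h2 with h | h
    · exact absurd h hp2
    · exact h
  set X0 : Fin k → Fin k → ZMod p := fun i j => - (2⁻¹ : ZMod p) * H i j with hX0def
  have hX0 : ∀ i j, H i j + X0 i j + X0 j i = 0 := by
    intro i j
    rw [hX0def]
    show H i j + - (2⁻¹ : ZMod p) * H i j + - (2⁻¹ : ZMod p) * H j i = 0
    rw [← hsymm i j]
    have hu : IsUnit (2 : ZMod p) := isUnit_iff_ne_zero.mpr hp2
    have hinv : (2⁻¹ : ZMod p) * 2 = 1 := ZMod.inv_mul_of_unit 2 hu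
    linear_combination (- H i j) * hinv
  rw [Nat.card_congr ((solEquivAlt H X0 hX0).trans (altEquiv hchar)),
    Nat.card_fun, Nat.card_zmod, card_ltPairs]

lemma card_sol_two {H : Fin k → Fin k → ZMod 2}
    (hsymm : ∀ i j, H i j = H j i) (hdiag : ∀ i, H i i = 0) :
    Nat.card {X : Fin k → Fin k → ZMod 2 // ∀ i j, H i j + X i j + X j i = 0}
      = 2 ^ (k * (k + 1) / 2) := by
  have hadd : ∀ a : ZMod 2, a + a = 0 := by decide
  have hneg : ∀ a : ZMod 2, -a = a := by decide
  set X0 : Fin k → Fin k → ZMod 2 := fun i j => if i ≤ j then H i j else 0 with hX0def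
  have hX0 : ∀ i j, H i j + X0 i j + X0 j i = 0 := by
    intro i j
    rw [hX0def]
    show H i j + (if i ≤ j then H i j else 0) + (if j ≤ i then H j i else 0) = 0
    rcases lt_trichotomy i j with h | h | h
    · rw [if_pos (le_of_lt h), if_neg (not_le_of_gt h), add_zero]
      exact hadd _
    · subst h
      rw [if_pos le_rfl, hdiag i]
      ring
    · rw [if_neg (not_le_of_gt h), if_pos (le_of_lt h), add_zero, hsymm i j]
      exact hadd _
  rw [Nat.card_congr ((solEquivAlt H X0 hX0).trans (symEquiv hadd)),
    Nat.card_fun, Nat.card_zmod, card_lePairs]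

lemma card_sol_two_empty {H : Fin k → Fin k → ZMod 2} {i₀ : Fin k} (hdiag : H i₀ i₀ ≠ 0) :
    Nat.card {X : Fin k → Fin k → ZMod 2 // ∀ i j, H i j + X i j + X j i = 0} = 0 := by
  have : IsEmpty {X : Fin k → Fin k → ZMod 2 // ∀ i j, H i j + X i j + X j i = 0} := by
    refine ⟨fun X => ?_⟩
    have h := X.2 i₀ i₀
    have hadd : ∀ a : ZMod 2, a + a = 0 := by decide
    have : H i₀ i₀ = 0 := by
      have h2 := hadd (X.1 i₀ i₀)
      linear_combination h - h2
    exact hdiag this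
  exact Nat.card_of_isEmpty

end SolCount

section WeightTwo

variable {n : ℕ}

lemma sum_ite_card {α : Type} [Fintype α] (P : α → Prop) [DecidablePred P] {R : Type}
    [CommRing R] : (∑ a : α, if P a then (1 : R) else 0)
      = ((Finset.univ.filter P).card : R) := by
  rw [← Finset.sum_filter, Finset.sum_const, nsmul_eq_mul, mul_one]

lemma sq_zmod4 : ∀ z : ZMod (2 ^ 2), z * z = if rr z ≠ 0 then 1 else 0 := by decide

lemma cast_sq_zmod4 : ∀ a : ZMod 2,
    (ZMod.cast a : ZMod (2 ^ 2)) * ZMod.cast a = if a ≠ 0 then 1 else 0 := by decide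

lemma mul_zmod2 : ∀ a b : ZMod 2, a * b = if a ≠ 0 ∧ b ≠ 0 then 1 else 0 := by decide

lemma add_ne_zmod2 : ∀ a b : ZMod 2,
    (a + b ≠ 0) ↔ ((a ≠ 0 ∨ b ≠ 0) ∧ ¬(a ≠ 0 ∧ b ≠ 0)) := by decide

/-- the residue code of a self-orthogonal quaternary code is doubly even -/
lemma doublyEven_resCode {C : Submodule (ZMod (2 ^ 2)) (Fin n → ZMod (2 ^ 2))}
    (hC : (C : Set (Fin n → ZMod (2 ^ 2))) ⊆ dualSet (C : Set (Fin n → ZMod (2 ^ 2)))) :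
    doublyEven ((resCode C : Submodule (ZMod 2) (Fin n → ZMod 2)) : Set (Fin n → ZMod 2)) := by
  rintro u ⟨x, hx, rfl⟩
  have h0 : ∑ i, x i * x i = 0 := hC hx x hx
  have h1 : ∑ i, x i * x i
      = ((Finset.univ.filter fun i => res' x i ≠ 0).card : ZMod (2 ^ 2)) := by
    rw [← sum_ite_card (fun i => res' x i ≠ 0)]
    exact Finset.sum_congr rfl fun i _ => sq_zmod4 (x i)
  rw [h1, ZMod.natCast_eq_zero_iff] at h0
  exact (by norm_num : (2 : ℕ) ^ 2 = 4) ▸ h0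

/-- doubly even codes are self-orthogonal -/
lemma de_le_dualSub {C1 : Submodule (ZMod 2) (Fin n → ZMod 2)}
    (hde : doublyEven (C1 : Set (Fin n → ZMod 2))) : C1 ≤ dualSub C1 := by
  intro x hx
  rw [mem_dualSub]
  intro y hy
  have h1 : ∑ i, x i * y i
      = ((Finset.univ.filter fun i => x i ≠ 0 ∧ y i ≠ 0).card : ZMod 2) := by
    rw [← sum_ite_card (fun i => x i ≠ 0 ∧ y i ≠ 0)]
    exact Finset.sum_congr rfl fun i _ => mul_zmod2 (x i) (y i)
  rw [h1, ZMod.natCast_eq_zero_iff]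
  set A := Finset.univ.filter fun i => x i ≠ 0 with hA
  set B := Finset.univ.filter fun i => y i ≠ 0 with hB
  have hI : (Finset.univ.filter fun i => x i ≠ 0 ∧ y i ≠ 0) = A ∩ B := by
    rw [hA, hB, ← Finset.filter_and]
  have hS : (Finset.univ.filter fun i => (x + y) i ≠ 0) = (A ∪ B) \ (A ∩ B) := by
    ext i
    simp only [Finset.mem_filter, Finset.mem_sdiff, Finset.mem_union, Finset.mem_inter,
      Finset.mem_univ, true_and, hA, hB]
    exact add_ne_zmod2 (x i) (y i)
  have h4A : 4 ∣ A.card := hde x hx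
  have h4B : 4 ∣ B.card := hde y hy
  have h4S : 4 ∣ ((A ∪ B) \ (A ∩ B)).card := by
    rw [← hS]
    exact hde (x + y) (C1.add_mem hx hy)
  have hcs : ((A ∪ B) \ (A ∩ B)).card = (A ∪ B).card - (A ∩ B).card :=
    Finset.card_sdiff_of_subset Finset.inter_subset_union
  have hui : (A ∪ B).card + (A ∩ B).card = A.card + B.card :=
    Finset.card_union_add_card_inter A B
  have hle : (A ∩ B).card ≤ (A ∪ B).card := Finset.card_le_card Finset.inter_subset_union
  rw [hI]
  omega

/-- the diagonal of the Gram matrix vanishes for doubly even codes -/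
lemma Hm_diag_zero {k : ℕ} {C1 : Submodule (ZMod 2) (Fin n → ZMod 2)}
    {vb : Fin k → (Fin n → ZMod 2)} (hde : doublyEven (C1 : Set (Fin n → ZMod 2)))
    (hmem : ∀ i, vb i ∈ C1) (i : Fin k) : Hm vb i i = 0 := by
  have hsum : ∑ l, tmat vb i l * tmat vb i l = 0 := by
    have h1 : ∑ l, tmat vb i l * tmat vb i l
        = ((Finset.univ.filter fun l => vb i l ≠ 0).card : ZMod (2 ^ 2)) := by
      rw [← sum_ite_card (fun l => vb i l ≠ 0)]
      exact Finset.sum_congr rfl fun l _ => cast_sq_zmod4 (vb i l)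
    rw [h1, ZMod.natCast_eq_zero_iff]
    exact (by norm_num : (2 : ℕ) ^ 2 = 4) ▸ hde (vb i) (hmem i)
  show pdiv (∑ l, tmat vb i l * tmat vb i l) = 0
  rw [hsum, pdiv]
  simp

end WeightTwo

section Assembly

variable {p n : ℕ} [hp : Fact p.Prime]

lemma ite_sum_helper (m : ℕ) (P : Prop) [Decidable P] (r : ℕ) (hr : P → r < m) (f : ℕ → ℕ) :
    (if P then f r else 0) = ∑ k1 ∈ Finset.range m, if (P ∧ r = k1) then f k1 else 0 := by
  by_cases hP : P
  · rw [if_pos hP]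
    have hterm : ∀ k1, (if (P ∧ r = k1) then f k1 else 0) = (if r = k1 then f k1 else 0) :=
      fun k1 => by simp [hP]
    rw [Finset.sum_congr rfl fun k1 _ => hterm k1,
      Finset.sum_ite_eq (Finset.range m) r f, if_pos (Finset.mem_range.mpr (hr hP))]
  · simp [hP]

/-- generic fiberwise count of self-dual codes -/
lemma count_selfdual (cond : Submodule (ZMod p) (Fin n → ZMod p) → Prop) (E : ℕ → ℕ)
    (hcond_of : ∀ C : Submodule (ZMod (p ^ 2)) (Fin n → ZMod (p ^ 2)),
      (C : Set (Fin n → ZMod (p ^ 2))) = dualSet (C : Set (Fin n → ZMod (p ^ 2))) →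
        cond (resCode C))
    (hbound : ∀ C1, cond C1 → 2 * Module.finrank (ZMod p) C1 ≤ n)
    (hfiber : ∀ C1, cond C1 →
      Nat.card {C : Submodule (ZMod (p ^ 2)) (Fin n → ZMod (p ^ 2)) //
        (C : Set (Fin n → ZMod (p ^ 2))) = dualSet (C : Set (Fin n → ZMod (p ^ 2))) ∧
        resCode C = C1} = p ^ (E (Module.finrank (ZMod p) C1))) :
    Nat.card {C : Submodule (ZMod (p ^ 2)) (Fin n → ZMod (p ^ 2)) //
        (C : Set (Fin n → ZMod (p ^ 2))) = dualSet (C : Set (Fin n → ZMod (p ^ 2)))}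
      = ∑ k1 ∈ Finset.range (n / 2 + 1),
          {C1 : Submodule (ZMod p) (Fin n → ZMod p) |
            cond C1 ∧ Module.finrank (ZMod p) C1 = k1}.ncard * p ^ (E k1) := by
  classical
  haveI hfin1 : Finite (Submodule (ZMod p) (Fin n → ZMod p)) :=
    Finite.of_injective SetLike.coe SetLike.coe_injective
  haveI hfin2 : Finite (Submodule (ZMod (p ^ 2)) (Fin n → ZMod (p ^ 2))) :=
    Finite.of_injective SetLike.coe SetLike.coe_injective
  haveI := Fintype.ofFinite (Submodule (ZMod p) (Fin n → ZMod p))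
  -- group by residue code
  have step1 : Nat.card {C : Submodule (ZMod (p ^ 2)) (Fin n → ZMod (p ^ 2)) //
        (C : Set (Fin n → ZMod (p ^ 2))) = dualSet (C : Set (Fin n → ZMod (p ^ 2)))}
      = ∑ C1 : Submodule (ZMod p) (Fin n → ZMod p),
          Nat.card {C : Submodule (ZMod (p ^ 2)) (Fin n → ZMod (p ^ 2)) //
            (C : Set (Fin n → ZMod (p ^ 2))) = dualSet (C : Set (Fin n → ZMod (p ^ 2))) ∧
            resCode C = C1} := by
    haveI := Fintype.ofFinite {C : Submodule (ZMod (p ^ 2)) (Fin n → ZMod (p ^ 2)) //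
        (C : Set (Fin n → ZMod (p ^ 2))) = dualSet (C : Set (Fin n → ZMod (p ^ 2)))}
    rw [← Nat.card_congr (Equiv.sigmaFiberEquiv
      (fun C : {C : Submodule (ZMod (p ^ 2)) (Fin n → ZMod (p ^ 2)) //
        (C : Set (Fin n → ZMod (p ^ 2))) = dualSet (C : Set (Fin n → ZMod (p ^ 2)))} =>
          resCode C.1))]
    rw [Nat.card_eq_fintype_card, Fintype.card_sigma]
    refine Finset.sum_congr rfl fun C1 _ => ?_
    rw [← Nat.card_eq_fintype_card]
    refine Nat.card_congr ⟨fun x => ⟨x.1.1, x.1.2, x.2⟩, fun y => ⟨⟨y.1, y.2.1⟩, y.2.2⟩,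
      fun x => rfl, fun y => rfl⟩
  rw [step1]
  -- each fiber count
  have step2 : ∀ C1, Nat.card {C : Submodule (ZMod (p ^ 2)) (Fin n → ZMod (p ^ 2)) //
        (C : Set (Fin n → ZMod (p ^ 2))) = dualSet (C : Set (Fin n → ZMod (p ^ 2))) ∧
        resCode C = C1}
      = if cond C1 then p ^ (E (Module.finrank (ZMod p) C1)) else 0 := by
    intro C1
    by_cases hc : cond C1
    · rw [if_pos hc, hfiber C1 hc]
    · rw [if_neg hc]
      have : IsEmpty {C : Submodule (ZMod (p ^ 2)) (Fin n → ZMod (p ^ 2)) //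
          (C : Set (Fin n → ZMod (p ^ 2))) = dualSet (C : Set (Fin n → ZMod (p ^ 2))) ∧
          resCode C = C1} := by
        refine ⟨fun X => hc ?_⟩
        rw [← X.2.2]
        exact hcond_of X.1 X.2.1
      exact Nat.card_of_isEmpty
  rw [Finset.sum_congr rfl fun C1 _ => step2 C1]
  -- expand by rank
  have step3 : ∀ C1 : Submodule (ZMod p) (Fin n → ZMod p),
      (if cond C1 then p ^ (E (Module.finrank (ZMod p) C1)) else 0)
        = ∑ k1 ∈ Finset.range (n / 2 + 1),
            if (cond C1 ∧ Module.finrank (ZMod p) C1 = k1) then p ^ (E k1) else 0 := by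
    intro C1
    refine ite_sum_helper _ _ _ (fun hc => ?_) (fun k1 => p ^ (E k1))
    have := hbound C1 hc
    omega
  rw [Finset.sum_congr rfl fun C1 _ => step3 C1]
  rw [Finset.sum_comm]
  refine Finset.sum_congr rfl fun k1 _ => ?_
  have step5 : (∑ C1 : Submodule (ZMod p) (Fin n → ZMod p),
      if (cond C1 ∧ Module.finrank (ZMod p) C1 = k1) then p ^ (E k1) else 0)
      = (Finset.univ.filter fun C1 : Submodule (ZMod p) (Fin n → ZMod p) =>
          cond C1 ∧ Module.finrank (ZMod p) C1 = k1).card * p ^ (E k1) := by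
    rw [← Finset.sum_filter, Finset.sum_const, smul_eq_mul]
  rw [step5]
  congr 1
  rw [← Nat.card_coe_set_eq, Nat.card_eq_fintype_card]
  rw [Fintype.card_subtype]
  rfl

end Assembly

section Instantiate

variable {p n : ℕ} [hp : Fact p.Prime]

lemma basis_data (C1 : Submodule (ZMod p) (Fin n → ZMod p)) :
    ∃ vb : Fin (Module.finrank (ZMod p) C1) → (Fin n → ZMod p),
      (∀ i, vb i ∈ C1) ∧ C1 ≤ Submodule.span (ZMod p) (Set.range vb) ∧
        LinearIndependent (ZMod p) vb := by
  set b := Module.finBasis (ZMod p) C1 with hb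
  refine ⟨fun i => (b i : Fin n → ZMod p), fun i => (b i).2, ?_, ?_⟩
  · have h1 : Submodule.map C1.subtype ⊤ = C1 := Submodule.map_subtype_top C1
    rw [← b.span_eq, Submodule.map_span, ← Set.range_comp] at h1
    exact le_of_eq h1.symm
  · have h2 := b.linearIndependent.map' C1.subtype (Submodule.ker_subtype C1)
    exact h2

lemma two_ne_zero_zmod (hp2 : p ≠ 2) : (2 : ZMod p) ≠ 0 := by
  intro h
  have h2 : ((2 : ℕ) : ZMod p) = 0 := by exact_mod_cast h
  rw [ZMod.natCast_eq_zero_iff] at h2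
  exact hp2 ((Nat.prime_dvd_prime_iff_eq hp.out Nat.prime_two).mp h2)

lemma fiber_card_odd (hp2 : p ≠ 2) (C1 : Submodule (ZMod p) (Fin n → ZMod p))
    (hso : C1 ≤ dualSub C1) :
    Nat.card {C : Submodule (ZMod (p ^ 2)) (Fin n → ZMod (p ^ 2)) //
        (C : Set (Fin n → ZMod (p ^ 2))) = dualSet (C : Set (Fin n → ZMod (p ^ 2))) ∧
        resCode C = C1}
      = p ^ ((Module.finrank (ZMod p) C1) * (Module.finrank (ZMod p) C1 - 1) / 2) := by
  obtain ⟨vb, hmem, hsp, hli⟩ := basis_data C1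
  rw [Nat.card_congr (fiberEquiv C1 vb hso hmem hsp hli)]
  exact card_sol_odd (two_ne_zero_zmod hp2) (Hm vb) (Hm_symm hso hmem)

lemma fiber_card_two (C1 : Submodule (ZMod 2) (Fin n → ZMod 2))
    (hde : doublyEven (C1 : Set (Fin n → ZMod 2))) :
    Nat.card {C : Submodule (ZMod (2 ^ 2)) (Fin n → ZMod (2 ^ 2)) //
        (C : Set (Fin n → ZMod (2 ^ 2))) = dualSet (C : Set (Fin n → ZMod (2 ^ 2))) ∧
        resCode C = C1}
      = 2 ^ ((Module.finrank (ZMod 2) C1) * (Module.finrank (ZMod 2) C1 + 1) / 2) := by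
  obtain ⟨vb, hmem, hsp, hli⟩ := basis_data C1
  have hso : C1 ≤ dualSub C1 := de_le_dualSub hde
  rw [Nat.card_congr (fiberEquiv C1 vb hso hmem hsp hli)]
  exact card_sol_two (Hm_symm hso hmem) (fun i => Hm_diag_zero hde hmem i)

lemma sorth_iff_le (C1 : Submodule (ZMod p) (Fin n → ZMod p)) :
    sorth (C1 : Set (Fin n → ZMod p)) ↔ C1 ≤ dualSub C1 := by
  constructor
  · intro h x hx
    rw [mem_dualSub]
    exact fun y hy => h x hx y hy
  · intro h x hx y hy
    have := h hx
    rw [mem_dualSub] at this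
    exact this y hy

lemma gauss_self (m : ℕ) (hp1 : 1 < p) : gauss p m m = 1 := by
  rw [gauss]
  refine Finset.prod_eq_one fun i hi => ?_
  refine div_self ?_
  have hlt : (p : ℚ) ^ i < (p : ℚ) ^ m := by
    have := pow_lt_pow_right₀ (a := (p : ℚ)) (by exact_mod_cast hp1) (Finset.mem_range.mp hi)
    exact this
  exact sub_ne_zero.mpr (ne_of_gt hlt)

lemma exp_eq_odd {k1 : ℕ} (hk : 2 * k1 ≤ n) :
    k1 * (2 * n - 3 * k1 - 1 - 2 * (n - 2 * k1)) / 2 = k1 * (k1 - 1) / 2 := by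
  rcases k1 with _ | m
  · simp
  · have h : 2 * n - 3 * (m + 1) - 1 - 2 * (n - 2 * (m + 1)) = (m + 1) - 1 := by omega
    rw [h]

lemma exp_eq_two {k1 : ℕ} (hk : 2 * k1 ≤ n) :
    k1 * (2 * n - 3 * k1 + 1 - 2 * (n - 2 * k1)) / 2 = k1 * (k1 + 1) / 2 := by
  have h : 2 * n - 3 * k1 + 1 - 2 * (n - 2 * k1) = k1 + 1 := by omega
  rw [h]

end Instantiate

/-- the number of self-dual codes of length `n` over `Z_{p^2}` is
`∑_{0 ≤ k₁ ≤ ⌊n/2⌋} M_{p^2}(k₁, n − 2k₁)`. -/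
theorem stmt17 (p n : ℕ) [Fact p.Prime] (hn : 0 < n) :
    ({C : Submodule (ZMod (p ^ 2)) (Fin n → ZMod (p ^ 2)) |
        (C : Set (Fin n → ZMod (p ^ 2))) = dualSet (C : Set (Fin n → ZMod (p ^ 2)))}.ncard : ℚ)
      = ∑ k1 ∈ Finset.range (n / 2 + 1), Mval p n k1 (n - 2 * k1) := by
  have hLHS : {C : Submodule (ZMod (p ^ 2)) (Fin n → ZMod (p ^ 2)) |
        (C : Set (Fin n → ZMod (p ^ 2))) = dualSet (C : Set (Fin n → ZMod (p ^ 2)))}.ncard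
      = Nat.card {C : Submodule (ZMod (p ^ 2)) (Fin n → ZMod (p ^ 2)) //
        (C : Set (Fin n → ZMod (p ^ 2))) = dualSet (C : Set (Fin n → ZMod (p ^ 2)))} :=
    (Nat.card_coe_set_eq _).symm
  rcases eq_or_ne p 2 with rfl | hp2
  · -- the case p = 2
    have hcount := count_selfdual (p := 2) (n := n)
      (fun C1 => doublyEven (C1 : Set (Fin n → ZMod 2))) (fun k => k * (k + 1) / 2)
      (fun C hC => doublyEven_resCode hC.subset)
      (fun C1 hc => finrank_dualSub_le_iff (de_le_dualSub hc))
      (fun C1 hc => fiber_card_two C1 hc)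
    rw [hLHS, hcount, Nat.cast_sum]
    refine Finset.sum_congr rfl fun k1 hk1 => ?_
    have hk : 2 * k1 ≤ n := by
      have := Finset.mem_range.mp hk1
      omega
    simp only [Mval, if_pos rfl]
    rw [gauss_self _ (by norm_num), mul_one, exp_eq_two hk, sigmaDE]
    push_cast
    ring
  · -- the case of odd p
    have hcount := count_selfdual (p := p) (n := n)
      (fun C1 => sorth (C1 : Set (Fin n → ZMod p))) (fun k => k * (k - 1) / 2)
      (fun C hC => (sorth_iff_le _).mpr (resCode_le_dualSub hC.subset))
      (fun C1 hc => finrank_dualSub_le_iff ((sorth_iff_le _).mp hc))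
      (fun C1 hc => fiber_card_odd hp2 C1 ((sorth_iff_le _).mp hc))
    rw [hLHS, hcount, Nat.cast_sum]
    refine Finset.sum_congr rfl fun k1 hk1 => ?_
    have hk : 2 * k1 ≤ n := by
      have := Finset.mem_range.mp hk1
      omega
    simp only [Mval, if_neg hp2]
    rw [gauss_self _ (Nat.Prime.one_lt (Fact.out : p.Prime)), mul_one, exp_eq_odd hk, sigmaSO]
    push_cast
    ring

end Paper
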